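/- arXiv:0904.1479 — 3 statements merged into one kernel-verified Lean document; each statement's English description precedes it below -/
import Mathlib

section
/- For every integer d ≥ 2, λ(𝓕_{d, C(d,⌊d/2⌋)+1}) ≥ 1/(d+1) > 0, where C(d,⌊d/2⌋) is the binomial coefficient. Consequently μ(d) := max{t : λ(𝓕_{d,t}) = 0} satisfies μ(d) ≤ C(d,⌊d/2⌋). Indeed, for every n ≥ d the set S = {x ∈ V_n : |x| ≡ 0 (mod d+1)} is 𝓕_{d, C(d,⌊d/2⌋)+1}-free: it contains vertices from at most one layer of the image of any embedding of Q_d into Q_n, hence at most C(d,⌊d/2⌋) such vertices. -/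
open Finset Filter Topology

/-- The weight of a vertex of the hypercube `{0,1}^n`: number of coordinates equal to 1. -/
def cubeWeight {n : ℕ} (x : Fin n → Bool) : ℕ :=
  (Finset.univ.filter fun i => x i = true).card

/-- The support of a vertex of the hypercube: the set of coordinates equal to 1. -/
def cubeSupp {n : ℕ} (x : Fin n → Bool) : Finset (Fin n) :=
  Finset.univ.filter fun i => x i = true

/-- An embedding of the `d`-dimensional hypercube `Q_d` into `Q_n`: an injective map on
vertices that preserves the edges (pairs at Hamming distance 1). -/
def IsCubeEmbedding {d n : ℕ} (i : (Fin d → Bool) → (Fin n → Bool)) : Prop :=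
  Function.Injective i ∧
    ∀ x y : Fin d → Bool, hammingDist x y = 1 → hammingDist (i x) (i y) = 1

/-- `S ⊆ V_n` is `F`-free (for `F ⊆ V_d`) if no embedding `i : Q_d → Q_n` has `i(F) ⊆ S`. -/
def IsFree {d n : ℕ} (F : Set (Fin d → Bool)) (S : Set (Fin n → Bool)) : Prop :=
  ∀ i : (Fin d → Bool) → (Fin n → Bool), IsCubeEmbedding i → ¬ (i '' F ⊆ S)

/-- `exc n F`: the maximum size of an `F`-free subset of `V_n = {0,1}^n`. -/
noncomputable def exc {d : ℕ} (n : ℕ) (F : Set (Fin d → Bool)) : ℕ :=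
  sSup {k : ℕ | ∃ S : Finset (Fin n → Bool), IsFree F (S : Set (Fin n → Bool)) ∧ S.card = k}

/-- `excT n d t`: the maximum size of a subset of V_n that is 𝓕_{d,t}-free, i.e. F-free for
every F ⊆ V_d with |F| = t. -/
noncomputable def excT (n d t : ℕ) : ℕ :=
  sSup {k : ℕ | ∃ S : Finset (Fin n → Bool),
    (∀ F : Set (Fin d → Bool), F.ncard = t → IsFree F (S : Set (Fin n → Bool))) ∧ S.card = k}


def bflip {d : ℕ} (j : Fin d) (x : Fin d → Bool) : Fin d → Bool :=
  Function.update x j (!x j)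

lemma bflip_apply {d : ℕ} (j : Fin d) (x : Fin d → Bool) (m : Fin d) :
    bflip j x m = if m = j then !x j else x m := by
  simp [bflip, Function.update]

lemma bflip_bflip {d : ℕ} (j : Fin d) (x : Fin d → Bool) : bflip j (bflip j x) = x := by
  funext m
  by_cases h : m = j
  · subst h; simp [bflip_apply]
  · simp [bflip_apply, h]

lemma bflip_ne {d : ℕ} (j : Fin d) (x : Fin d → Bool) : bflip j x ≠ x := by
  intro h
  have := congrFun h j
  simp [bflip_apply] at this

lemma hammingDist_bflip {d : ℕ} (j : Fin d) (x : Fin d → Bool) :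
    hammingDist x (bflip j x) = 1 := by
  have h : (Finset.univ.filter fun m => x m ≠ bflip j x m) = {j} := by
    ext m
    by_cases h : m = j <;> simp [bflip_apply, h]
  simp only [hammingDist]
  rw [show ({i | x i ≠ bflip j x i} : Finset (Fin d)) = {j} from h]
  simp

section Emb
variable {d n : ℕ} {i : (Fin d → Bool) → (Fin n → Bool)}

lemma exists_flip_coord (hi : IsCubeEmbedding i) (x : Fin d → Bool) (j : Fin d) :
    ∃ m : Fin n, ∀ m', (i x m' ≠ i (bflip j x) m') ↔ m' = m := by
  have h1 : hammingDist (i x) (i (bflip j x)) = 1 := hi.2 _ _ (hammingDist_bflip j x)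
  rw [hammingDist, Finset.card_eq_one] at h1
  obtain ⟨a, ha⟩ := h1
  refine ⟨a, fun m' => ?_⟩
  have := Finset.ext_iff.mp ha m'
  simpa using this

noncomputable def Dc (hi : IsCubeEmbedding i) (x : Fin d → Bool) (j : Fin d) : Fin n :=
  (exists_flip_coord hi x j).choose

lemma Dc_spec (hi : IsCubeEmbedding i) (x : Fin d → Bool) (j : Fin d) (m : Fin n) :
    (i x m ≠ i (bflip j x) m) ↔ m = Dc hi x j :=
  (exists_flip_coord hi x j).choose_spec m

lemma Dc_uniq (hi : IsCubeEmbedding i) (x : Fin d → Bool) (j : Fin d) (e : Fin n)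
    (h : ∀ m, (i x m ≠ i (bflip j x) m) ↔ m = e) : e = Dc hi x j := by
  rw [← Dc_spec hi x j e, h]

lemma i_bflip_eval (hi : IsCubeEmbedding i) (x : Fin d → Bool) (j : Fin d) (m : Fin n) :
    i (bflip j x) m = if m = Dc hi x j then !(i x m) else i x m := by
  by_cases h : m = Dc hi x j
  · have := (Dc_spec hi x j m).mpr h
    simp only [h, if_pos rfl] at this ⊢
    cases hb : i x m <;> cases hb' : i (bflip j x) m <;> simp_all
  · have := (Dc_spec hi x j m).not.mpr (by simpa using h)
    push_neg at this
    simp [h, this.symm]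

lemma Dc_flip (hi : IsCubeEmbedding i) (x : Fin d → Bool) (j : Fin d) :
    Dc hi (bflip j x) j = Dc hi x j := by
  symm
  apply Dc_uniq
  intro m
  rw [bflip_bflip]
  rw [← Dc_spec hi x j m]
  exact ne_comm

end Emb

section Emb2
variable {d n : ℕ} {i : (Fin d → Bool) → (Fin n → Bool)}

lemma bflip_apply_self {d : ℕ} (j : Fin d) (x : Fin d → Bool) : bflip j x j = !x j := by
  simp [bflip_apply]

lemma bflip_apply_ne {d : ℕ} {j m : Fin d} (x : Fin d → Bool) (h : m ≠ j) :
    bflip j x m = x m := by simp [bflip_apply, h]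

lemma bflip_comm {d : ℕ} {j k : Fin d} (x : Fin d → Bool) (hjk : j ≠ k) :
    bflip j (bflip k x) = bflip k (bflip j x) := by
  funext m
  by_cases h1 : m = j
  · subst h1
    rw [bflip_apply_self, bflip_apply_ne _ hjk, bflip_apply_ne _ hjk, bflip_apply_self]
  · by_cases h2 : m = k
    · subst h2
      rw [bflip_apply_ne _ h1, bflip_apply_self, bflip_apply_self, bflip_apply_ne _ h1]
    · rw [bflip_apply_ne _ h1, bflip_apply_ne _ h2, bflip_apply_ne _ h2, bflip_apply_ne _ h1]

lemma Dc_ne (hi : IsCubeEmbedding i) (x : Fin d → Bool) {j k : Fin d} (hjk : j ≠ k) :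
    Dc hi x j ≠ Dc hi x k := by
  intro h
  have heq : i (bflip j x) = i (bflip k x) := by
    funext m
    rw [i_bflip_eval hi x j m, i_bflip_eval hi x k m, h]
  have := congrFun (hi.1 heq) j
  rw [bflip_apply_self, bflip_apply_ne _ hjk] at this
  simp at this

lemma i_return (hi : IsCubeEmbedding i) (x : Fin d → Bool) (j j' : Fin d)
    (h : Dc hi (bflip j x) j' = Dc hi x j) : bflip j' (bflip j x) = x := by
  apply hi.1
  funext m
  rw [i_bflip_eval hi (bflip j x) j' m, h, i_bflip_eval hi x j m]
  by_cases hm : m = Dc hi x j <;> simp [hm]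

lemma Dc_four (hi : IsCubeEmbedding i) (x : Fin d → Bool) {j k : Fin d} (hjk : j ≠ k) :
    Dc hi x j = Dc hi (bflip k x) j := by
  have hcomm : bflip j (bflip k x) = bflip k (bflip j x) := bflip_comm x hjk
  have hab : Dc hi x j ≠ Dc hi x k := Dc_ne hi x hjk
  have hab' : Dc hi x j ≠ Dc hi (bflip j x) k := by
    intro h
    have hret := i_return hi x j k h.symm
    have h2 := congrFun hret k
    rw [bflip_apply_self, bflip_apply_ne _ (Ne.symm hjk)] at h2
    simp at h2
  have e1 := (Dc_spec hi x k (Dc hi x j)).symm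
  have e2 := (Dc_spec hi (bflip k x) j (Dc hi x j)).symm
  have e3 := (Dc_spec hi x j (Dc hi x j)).symm
  have e4 := (Dc_spec hi (bflip j x) k (Dc hi x j)).symm
  rw [hcomm] at e2
  have h3 : i x (Dc hi x j) ≠ i (bflip j x) (Dc hi x j) := e3.mp rfl
  have hpq : i x (Dc hi x j) = i (bflip k x) (Dc hi x j) := by
    by_contra h
    exact hab (e1.mpr h)
  have hsr : i (bflip j x) (Dc hi x j) = i (bflip k (bflip j x)) (Dc hi x j) := by
    by_contra h
    exact hab' (e4.mpr h)
  refine e2.mpr ?_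
  rw [← hpq, ← hsr]
  exact h3

lemma supp_empty_eq {d : ℕ} {x : Fin d → Bool} (hx : cubeSupp x = ∅) :
    x = fun _ => false := by
  funext m
  by_contra h
  have hm : m ∈ cubeSupp x := by
    simp only [cubeSupp, Finset.mem_filter, Finset.mem_univ, true_and]
    cases hxm : x m
    · exact absurd hxm h
    · rfl
  rw [hx] at hm
  simp at hm

lemma Dc_const (hi : IsCubeEmbedding i) :
    ∀ (s : Finset (Fin d)) (x : Fin d → Bool), cubeSupp x = s →
      ∀ j, Dc hi x j = Dc hi (fun _ => false) j := by
  intro s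
  induction s using Finset.induction_on with
  | empty =>
    intro x hx j
    rw [supp_empty_eq hx]
  | @insert k t hk ih =>
    intro x hx j
    have hxk : x k = true := by
      have : k ∈ cubeSupp x := by rw [hx]; simp
      simpa [cubeSupp] using this
    set x' := Function.update x k false with hx'
    have hsupp' : cubeSupp x' = t := by
      ext m
      by_cases hm : m = k
      · subst hm
        simp [cubeSupp, hx', hk]
      · have hxm : x' m = x m := Function.update_of_ne hm _ _
        simp only [cubeSupp, Finset.mem_filter, Finset.mem_univ, true_and, hxm]
        have := Finset.ext_iff.mp hx m
        simp only [cubeSupp, Finset.mem_filter, Finset.mem_univ, true_and,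
          Finset.mem_insert] at this
        rw [this]
        simp [hm]
    have hxx : x = bflip k x' := by
      funext m
      by_cases hm : m = k
      · subst hm
        rw [bflip_apply_self, hx', Function.update_self, hxk]
        rfl
      · rw [bflip_apply_ne _ hm, hx', Function.update_of_ne hm]
    by_cases hjk : j = k
    · subst hjk
      rw [hxx, Dc_flip hi x' j, ih x' hsupp' j]
    · rw [hxx, ← Dc_four hi x' hjk, ih x' hsupp' j]

end Emb2

section Emb3
variable {d n : ℕ} {i : (Fin d → Bool) → (Fin n → Bool)}

lemma mem_cubeSupp {d : ℕ} (x : Fin d → Bool) (m : Fin d) :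
    m ∈ cubeSupp x ↔ x m = true := by simp [cubeSupp]

lemma insert_eq_symmDiff {α : Type*} [DecidableEq α] {a : α} {s : Finset α} (h : a ∉ s) :
    insert a s = symmDiff s {a} := by
  ext m
  simp only [Finset.mem_insert, Finset.mem_symmDiff, Finset.mem_singleton]
  constructor
  · rintro (rfl | hm)
    · exact Or.inr ⟨rfl, h⟩
    · exact Or.inl ⟨hm, fun he => h (he ▸ hm)⟩
  · rintro (⟨hm, _⟩ | ⟨rfl, _⟩)
    · exact Or.inr hm
    · exact Or.inl rfl

lemma card_symmDiff_add {α : Type*} [DecidableEq α] (s t : Finset α) :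
    (symmDiff s t).card + 2 * (s ∩ t).card = s.card + t.card := by
  have h1 : symmDiff s t = (s \ t) ∪ (t \ s) := rfl
  have h2 : Disjoint (s \ t) (t \ s) :=
    Finset.disjoint_left.mpr fun a ha hb => (Finset.mem_sdiff.mp hb).2 (Finset.mem_sdiff.mp ha).1
  rw [h1, Finset.card_union_of_disjoint h2]
  have h3 := Finset.card_sdiff_add_card_inter s t
  have h4 := Finset.card_sdiff_add_card_inter t s
  rw [Finset.inter_comm t s] at h4
  omega

/-- Structure of embeddings: the support of `i x` is the symmetric difference of the support
of `i 0` with the image of the support of `x` under the direction map. -/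
lemma supp_image (hi : IsCubeEmbedding i) :
    ∀ (s : Finset (Fin d)) (x : Fin d → Bool), cubeSupp x = s →
      cubeSupp (i x) =
        symmDiff (cubeSupp (i (fun _ => false))) (s.image fun j => Dc hi (fun _ => false) j) := by
  intro s
  induction s using Finset.induction_on with
  | empty =>
    intro x hx
    rw [supp_empty_eq hx]
    rw [show ((∅ : Finset (Fin d)).image fun j => Dc hi (fun _ => false) j) = ∅ from rfl]
    rw [show (∅ : Finset (Fin n)) = (⊥ : Finset (Fin n)) from rfl, symmDiff_bot]
  | @insert k t hk ih =>
    intro x hx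
    have hxk : x k = true := by
      have : k ∈ cubeSupp x := by rw [hx]; simp
      simpa [cubeSupp] using this
    set x' := Function.update x k false with hx'
    have hsupp' : cubeSupp x' = t := by
      ext m
      by_cases hm : m = k
      · subst hm
        simp [cubeSupp, hx', hk]
      · have hxm : x' m = x m := Function.update_of_ne hm _ _
        simp only [cubeSupp, Finset.mem_filter, Finset.mem_univ, true_and, hxm]
        have := Finset.ext_iff.mp hx m
        simp only [cubeSupp, Finset.mem_filter, Finset.mem_univ, true_and,
          Finset.mem_insert] at this
        rw [this]
        simp [hm]
    have hxx : x = bflip k x' := by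
      funext m
      by_cases hm : m = k
      · subst hm
        rw [bflip_apply_self, hx', Function.update_self, hxk]
        rfl
      · rw [bflip_apply_ne _ hm, hx', Function.update_of_ne hm]
    have hDk : Dc hi x' k = Dc hi (fun _ => false) k := Dc_const hi t x' hsupp' k
    -- step: cubeSupp (i x) = cubeSupp (i x') ∆ {δ k}
    have hstep : cubeSupp (i x) = symmDiff (cubeSupp (i x')) {Dc hi (fun _ => false) k} := by
      ext m
      rw [mem_cubeSupp, Finset.mem_symmDiff, Finset.mem_singleton, mem_cubeSupp, hxx,
        i_bflip_eval hi x' k m, hDk]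
      by_cases hm : m = Dc hi (fun _ => false) k
      · simp only [hm, if_pos rfl]
        cases hv : i x' m <;> simp
      · simp only [if_neg hm, hm]
        tauto
    have hnotmem : Dc hi (fun _ => false) k ∉ t.image fun j => Dc hi (fun _ => false) j := by
      intro hmem
      obtain ⟨j, hjt, hje⟩ := Finset.mem_image.mp hmem
      have : j ≠ k := fun he => hk (he ▸ hjt)
      exact Dc_ne hi (fun _ => false) this hje
    rw [hstep, ih x' hsupp', symmDiff_assoc, Finset.image_insert,
      insert_eq_symmDiff hnotmem]

end Emb3

section Emb4
variable {d n : ℕ} {i : (Fin d → Bool) → (Fin n → Bool)}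

lemma cubeWeight_eq_card_supp {d : ℕ} (x : Fin d → Bool) :
    cubeWeight x = (cubeSupp x).card := rfl

lemma delta_inj (hi : IsCubeEmbedding i) :
    Function.Injective (fun j => Dc hi (fun _ => false) j) := by
  intro j k h
  by_contra hne
  exact Dc_ne hi (fun _ => false) hne h

/-- Key identity: `w(i x) + τ = w(i 0) + |supp x ∆ T|`. -/
lemma weight_identity (hi : IsCubeEmbedding i) (x : Fin d → Bool) :
    cubeWeight (i x) +
      (Finset.univ.filter fun j =>
        Dc hi (fun _ => false) j ∈ cubeSupp (i (fun _ => false))).card =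
    (cubeSupp (i (fun _ => false))).card +
      (symmDiff (cubeSupp x) (Finset.univ.filter fun j =>
        Dc hi (fun _ => false) j ∈ cubeSupp (i (fun _ => false)))).card := by
  classical
  set A := cubeSupp (i (fun _ => false)) with hA
  set T := Finset.univ.filter fun j => Dc hi (fun _ => false) j ∈ A with hT
  have hB := supp_image hi (cubeSupp x) x rfl
  have h1 := card_symmDiff_add A ((cubeSupp x).image fun j => Dc hi (fun _ => false) j)
  have h2 := card_symmDiff_add (cubeSupp x) T
  have hBcard : ((cubeSupp x).image fun j => Dc hi (fun _ => false) j).card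
      = (cubeSupp x).card := Finset.card_image_of_injective _ (delta_inj hi)
  have hint : A ∩ ((cubeSupp x).image fun j => Dc hi (fun _ => false) j)
      = ((cubeSupp x ∩ T).image fun j => Dc hi (fun _ => false) j) := by
    ext m
    simp only [Finset.mem_inter, Finset.mem_image, hT, Finset.mem_filter, Finset.mem_univ,
      true_and]
    constructor
    · rintro ⟨hmA, j, hj, rfl⟩
      exact ⟨j, ⟨hj, hmA⟩, rfl⟩
    · rintro ⟨j, ⟨hj, hjA⟩, rfl⟩
      exact ⟨hjA, j, hj, rfl⟩
  have hintcard : ((cubeSupp x ∩ T).image fun j => Dc hi (fun _ => false) j).card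
      = (cubeSupp x ∩ T).card := Finset.card_image_of_injective _ (delta_inj hi)
  have hw : cubeWeight (i x)
      = (symmDiff A ((cubeSupp x).image fun j => Dc hi (fun _ => false) j)).card := by
    rw [cubeWeight_eq_card_supp, hB]
  rw [hw]
  rw [hint, hintcard] at h1
  omega

lemma symmDiff_card_le {d : ℕ} (s t : Finset (Fin d)) : (symmDiff s t).card ≤ d := by
  have := Finset.card_le_univ (symmDiff s t)
  simpa using this

/-- All points of the hypercube whose images lie in a fixed residue class mod `d+1`
have images of equal weight. -/
lemma weight_eq_of_mod (hi : IsCubeEmbedding i) (c : ℕ) (x1 x2 : Fin d → Bool)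
    (h1 : cubeWeight (i x1) % (d + 1) = c) (h2 : cubeWeight (i x2) % (d + 1) = c) :
    cubeWeight (i x1) = cubeWeight (i x2) := by
  set τ := (Finset.univ.filter fun j =>
    Dc hi (fun _ => false) j ∈ cubeSupp (i (fun _ => false))).card with hτ
  have e1 := weight_identity hi x1
  have e2 := weight_identity hi x2
  have b1 : (symmDiff (cubeSupp x1) (Finset.univ.filter fun j =>
      Dc hi (fun _ => false) j ∈ cubeSupp (i (fun _ => false)))).card ≤ d :=
    symmDiff_card_le _ _
  have b2 : (symmDiff (cubeSupp x2) (Finset.univ.filter fun j =>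
      Dc hi (fun _ => false) j ∈ cubeSupp (i (fun _ => false)))).card ≤ d :=
    symmDiff_card_le _ _
  rw [← hτ] at e1 e2
  have hmod : cubeWeight (i x1) + τ ≡ cubeWeight (i x2) + τ [MOD d + 1] :=
    Nat.ModEq.add_right τ (by rw [Nat.ModEq, h1, h2])
  rcases le_total (cubeWeight (i x1) + τ) (cubeWeight (i x2) + τ) with hle | hle
  · have hdvd : (d + 1) ∣ (cubeWeight (i x2) + τ) - (cubeWeight (i x1) + τ) :=
      (Nat.modEq_iff_dvd' hle).mp hmod
    have hlt : (cubeWeight (i x2) + τ) - (cubeWeight (i x1) + τ) < d + 1 := by omega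
    have := Nat.eq_zero_of_dvd_of_lt hdvd hlt
    omega
  · have hdvd : (d + 1) ∣ (cubeWeight (i x1) + τ) - (cubeWeight (i x2) + τ) :=
      (Nat.modEq_iff_dvd' hle).mp hmod.symm
    have hlt : (cubeWeight (i x1) + τ) - (cubeWeight (i x2) + τ) < d + 1 := by omega
    have := Nat.eq_zero_of_dvd_of_lt hdvd hlt
    omega

lemma symmDiff_cancel_right' {α : Type*} [DecidableEq α] (s t : Finset α) :
    symmDiff (symmDiff s t) t = s := by
  ext m
  simp only [Finset.mem_symmDiff]
  tauto

/-- The level set of the weight function of an embedding has size at most `C(d, d/2)`. -/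
lemma level_card_le (hi : IsCubeEmbedding i) (c : ℕ) :
    (Finset.univ.filter fun x : Fin d → Bool => cubeWeight (i x) = c).card
      ≤ d.choose (d / 2) := by
  classical
  set T := Finset.univ.filter fun j =>
    Dc hi (fun _ => false) j ∈ cubeSupp (i (fun _ => false)) with hT
  set w0 := (cubeSupp (i (fun _ => false))).card with hw0
  set L := Finset.univ.filter fun x : Fin d → Bool => cubeWeight (i x) = c with hL
  rcases Finset.eq_empty_or_nonempty L with hLe | ⟨x1, hx1⟩
  · rw [hLe]; simp
  have hx1' : cubeWeight (i x1) = c := by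
    rw [hL] at hx1; simpa using hx1
  set m := (symmDiff (cubeSupp x1) T).card with hm
  have hmap : ∀ x ∈ L, symmDiff (cubeSupp x) T ∈ Finset.univ.powersetCard m := by
    intro x hx
    have hxc : cubeWeight (i x) = c := by rw [hL] at hx; simpa using hx
    have e1 := weight_identity hi x
    have e2 := weight_identity hi x1
    rw [← hT] at e1 e2
    rw [hxc] at e1
    rw [hx1'] at e2
    rw [Finset.mem_powersetCard]
    exact ⟨Finset.subset_univ _, by omega⟩
  have hinj : ∀ x ∈ L, ∀ y ∈ L, symmDiff (cubeSupp x) T = symmDiff (cubeSupp y) T → x = y := by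
    intro x _ y _ hxy
    have hs : cubeSupp x = cubeSupp y := by
      have := congrArg (fun s => symmDiff s T) hxy
      simpa [symmDiff_cancel_right'] using this
    funext j
    have := Finset.ext_iff.mp hs j
    simp only [mem_cubeSupp] at this
    cases hxj : x j <;> cases hyj : y j <;> simp_all
  have hcard := Finset.card_le_card_of_injOn _ hmap hinj
  calc L.card ≤ (Finset.univ.powersetCard m).card := hcard
    _ = d.choose m := by rw [Finset.card_powersetCard]; simp
    _ ≤ d.choose (d / 2) := Nat.choose_le_middle m d

end Emb4

/-- Main freeness lemma: any residue class mod `d+1` is `F`-free for `F` larger than the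
middle binomial coefficient. -/
lemma modclass_free {d : ℕ} (n c : ℕ) (F : Set (Fin d → Bool))
    (hF : d.choose (d / 2) < F.ncard) :
    IsFree F {x : Fin n → Bool | cubeWeight x % (d + 1) = c} := by
  classical
  intro i hi himg
  set Afin := Finset.univ.filter fun x : Fin d → Bool =>
    cubeWeight (i x) % (d + 1) = c with hAfin
  have hFsub : F ⊆ ↑Afin := by
    intro x hx
    have : i x ∈ {x : Fin n → Bool | cubeWeight x % (d + 1) = c} :=
      himg ⟨x, hx, rfl⟩
    simp only [Set.mem_setOf_eq] at this
    simp [hAfin, this]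
  have hcard : F.ncard ≤ Afin.card := by
    have := Set.ncard_le_ncard hFsub (Afin.finite_toSet)
    simpa [Set.ncard_coe_finset] using this
  rcases Finset.eq_empty_or_nonempty Afin with hAe | ⟨x1, hx1⟩
  · rw [hAe] at hcard; simp at hcard; omega
  have hx1' : cubeWeight (i x1) % (d + 1) = c := by
    rw [hAfin] at hx1; simpa using hx1
  have hsub : Afin ⊆ Finset.univ.filter fun x : Fin d → Bool =>
      cubeWeight (i x) = cubeWeight (i x1) := by
    intro x hx
    have hxc : cubeWeight (i x) % (d + 1) = c := by rw [hAfin] at hx; simpa using hx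
    simp only [Finset.mem_filter, Finset.mem_univ, true_and]
    exact weight_eq_of_mod hi c x x1 hxc hx1'
  have := (Finset.card_le_card hsub).trans (level_card_le hi (cubeWeight (i x1)))
  omega

section ExcT

lemma excT_bddAbove (n d t : ℕ) :
    BddAbove {k : ℕ | ∃ S : Finset (Fin n → Bool),
      (∀ F : Set (Fin d → Bool), F.ncard = t → IsFree F (S : Set (Fin n → Bool))) ∧
        S.card = k} := by
  refine ⟨2 ^ n, fun k hk => ?_⟩
  obtain ⟨S, _, rfl⟩ := hk
  calc S.card ≤ Fintype.card (Fin n → Bool) := Finset.card_le_univ S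
    _ = 2 ^ n := by simp [Fintype.card_fun]

lemma excT_nonempty (n d t : ℕ) (ht : 1 ≤ t) :
    Set.Nonempty {k : ℕ | ∃ S : Finset (Fin n → Bool),
      (∀ F : Set (Fin d → Bool), F.ncard = t → IsFree F (S : Set (Fin n → Bool))) ∧
        S.card = k} := by
  refine ⟨0, ∅, fun F hF => ?_, by simp⟩
  intro i hi himg
  have hne : F.Nonempty := Set.nonempty_of_ncard_ne_zero (by omega)
  obtain ⟨x, hx⟩ := hne
  have : i x ∈ (↑(∅ : Finset (Fin n → Bool)) : Set (Fin n → Bool)) := himg ⟨x, hx, rfl⟩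
  simp at this

lemma le_excT {n d t : ℕ} (S : Finset (Fin n → Bool))
    (hS : ∀ F : Set (Fin d → Bool), F.ncard = t → IsFree F (S : Set (Fin n → Bool))) :
    S.card ≤ excT n d t :=
  le_csSup (excT_bddAbove n d t) ⟨S, hS, rfl⟩

lemma excT_le (n d t : ℕ) (ht : 1 ≤ t) : excT n d t ≤ 2 ^ n := by
  apply csSup_le (excT_nonempty n d t ht)
  rintro k ⟨S, _, rfl⟩
  calc S.card ≤ Fintype.card (Fin n → Bool) := Finset.card_le_univ S
    _ = 2 ^ n := by simp [Fintype.card_fun]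

lemma excT_mem (n d t : ℕ) (ht : 1 ≤ t) :
    ∃ S : Finset (Fin n → Bool),
      (∀ F : Set (Fin d → Bool), F.ncard = t → IsFree F (S : Set (Fin n → Bool))) ∧
        S.card = excT n d t :=
  Nat.sSup_mem (excT_nonempty n d t ht) (excT_bddAbove n d t)

/-- Lower bound: the largest residue class mod `d+1` is free, giving
`2^n ≤ (d+1) * excT n d t` whenever `t > C(d, d/2)`. -/
lemma excT_lower (n d t : ℕ) (ht : d.choose (d / 2) < t) :
    2 ^ n ≤ (d + 1) * excT n d t := by
  classical
  set f : ℕ → ℕ := fun c =>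
    (Finset.univ.filter fun x : Fin n → Bool => cubeWeight x % (d + 1) = c).card with hf
  have hsum : ∑ c ∈ Finset.range (d + 1), f c = 2 ^ n := by
    rw [hf]
    rw [← Finset.card_eq_sum_card_fiberwise
      (f := fun x : Fin n → Bool => cubeWeight x % (d + 1)) (s := Finset.univ)
      (t := Finset.range (d + 1)) (fun x _ => Finset.mem_range.mpr (Nat.mod_lt _ (by omega)))]
    simp [Fintype.card_fun]
  have hpig : ∃ c ∈ Finset.range (d + 1), 2 ^ n ≤ (d + 1) * f c := by
    apply Finset.exists_le_of_sum_le ⟨0, Finset.mem_range.mpr (by omega)⟩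
    rw [← Finset.mul_sum, hsum, Finset.sum_const, Finset.card_range, smul_eq_mul]
  obtain ⟨c, _, hc⟩ := hpig
  have hfree : ∀ F : Set (Fin d → Bool), F.ncard = t →
      IsFree F ((Finset.univ.filter fun x : Fin n → Bool => cubeWeight x % (d + 1) = c) :
        Set (Fin n → Bool)) := by
    intro F hF
    have : ((Finset.univ.filter fun x : Fin n → Bool => cubeWeight x % (d + 1) = c) :
        Set (Fin n → Bool)) = {x : Fin n → Bool | cubeWeight x % (d + 1) = c} := by
      ext x; simp
    rw [this]
    exact modclass_free n c F (by omega)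
  have := le_excT _ hfree
  calc 2 ^ n ≤ (d + 1) * f c := hc
    _ ≤ (d + 1) * excT n d t := Nat.mul_le_mul_left _ this

lemma hammingDist_cons {n : ℕ} (b : Bool) (u v : Fin n → Bool) :
    hammingDist (Fin.cons b u : Fin (n + 1) → Bool) (Fin.cons b v : Fin (n + 1) → Bool)
      = hammingDist u v := by
  simp only [hammingDist]
  rw [Finset.card_filter, Finset.card_filter, Fin.sum_univ_succ]
  simp

/-- Monotonicity: `excT (n+1) ≤ 2 * excT n`. -/
lemma excT_succ_le (n d t : ℕ) (ht : 1 ≤ t) : excT (n + 1) d t ≤ 2 * excT n d t := by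
  classical
  obtain ⟨S, hSfree, hScard⟩ := excT_mem (n + 1) d t ht
  rw [← hScard]
  have key : ∀ b : Bool, (S.filter fun v => v 0 = b).card ≤ excT n d t := by
    intro b
    set Sb : Finset (Fin n → Bool) := (S.filter fun v => v 0 = b).image Fin.tail with hSb
    have hmem : ∀ x : Fin n → Bool, x ∈ Sb ↔ Fin.cons b x ∈ S := by
      intro x
      rw [hSb]
      simp only [Finset.mem_image, Finset.mem_filter]
      constructor
      · rintro ⟨v, ⟨hvS, hv0⟩, rfl⟩
        rwa [← hv0, Fin.cons_self_tail]
      · intro h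
        exact ⟨Fin.cons b x, ⟨h, by simp⟩, by simp [Fin.tail_cons]⟩
    have hcard : Sb.card = (S.filter fun v => v 0 = b).card := by
      rw [hSb]
      apply Finset.card_image_of_injOn
      intro u hu v hv huv
      have hu0 : u 0 = b := (Finset.mem_filter.mp hu).2
      have hv0 : v 0 = b := (Finset.mem_filter.mp hv).2
      have : Fin.cons b (Fin.tail u) = Fin.cons b (Fin.tail v) := by rw [huv]
      rwa [← hu0, Fin.cons_self_tail, hu0, ← hv0, Fin.cons_self_tail] at this
    have hfree : ∀ F : Set (Fin d → Bool), F.ncard = t →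
        IsFree F (Sb : Set (Fin n → Bool)) := by
      intro F hF i hi himg
      have hi' : IsCubeEmbedding
          (fun x => (Fin.cons b (i x) : Fin (n+1) → Bool)) := by
        constructor
        · intro x y hxy
          exact hi.1 (Fin.cons_right_injective (α := fun _ : Fin (n+1) => Bool) b hxy)
        · intro x y hxy
          rw [hammingDist_cons b (i x) (i y)]
          exact hi.2 x y hxy
      apply hSfree F hF _ hi'
      rintro w ⟨x, hx, rfl⟩
      have : i x ∈ (Sb : Set (Fin n → Bool)) := himg ⟨x, hx, rfl⟩
      have := (hmem (i x)).mp (by simpa using this)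
      simpa using this
    rw [← hcard]
    exact le_excT Sb hfree
  have hsplit : S.card = ∑ b ∈ (Finset.univ : Finset Bool), (S.filter fun v => v 0 = b).card :=
    Finset.card_eq_sum_card_fiberwise (fun x _ => Finset.mem_univ _)
  rw [hsplit, show (Finset.univ : Finset Bool) = {true, false} from rfl,
    Finset.sum_insert (by simp), Finset.sum_singleton]
  calc (S.filter fun v => v 0 = true).card + (S.filter fun v => v 0 = false).card
      ≤ excT n d t + excT n d t := Nat.add_le_add (key true) (key false)
    _ = 2 * excT n d t := (two_mul _).symm

end ExcT

/-- For every d ≥ 2: for each n ≥ d the set {x : |x| ≡ 0 (mod d+1)} is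
𝓕_{d, C(d,⌊d/2⌋)+1}-free; hence λ(𝓕_{d, C(d,⌊d/2⌋)+1}) ≥ 1/(d+1) > 0, and consequently
μ(d) = max{t : λ(𝓕_{d,t}) = 0} satisfies μ(d) ≤ C(d,⌊d/2⌋). -/
theorem mu_upper_bound (d : ℕ) (hd : 2 ≤ d) :
    (∀ n : ℕ, d ≤ n → ∀ F : Set (Fin d → Bool), F.ncard = d.choose (d / 2) + 1 →
      IsFree F {x : Fin n → Bool | cubeWeight x % (d + 1) = 0}) ∧
    (∃ L : ℝ, 1 / (d + 1) ≤ L ∧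
      Filter.Tendsto (fun n : ℕ => (excT n d (d.choose (d / 2) + 1) : ℝ) / 2 ^ n)
        Filter.atTop (𝓝 L)) ∧
    (0 : ℝ) < 1 / (d + 1) ∧
    (∀ t : ℕ,
      Filter.Tendsto (fun n : ℕ => (excT n d t : ℝ) / 2 ^ n) Filter.atTop (𝓝 0) →
      t ≤ d.choose (d / 2)) := by
  have hlow : ∀ (t : ℕ), d.choose (d / 2) < t → ∀ n : ℕ,
      1 / ((d : ℝ) + 1) ≤ (excT n d t : ℝ) / 2 ^ n := by
    intro t ht n
    have h := excT_lower n d t ht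
    have hR : (2 : ℝ) ^ n ≤ ((d : ℝ) + 1) * excT n d t := by
      have := (Nat.cast_le (α := ℝ)).mpr h
      push_cast at this
      linarith
    rw [div_le_div_iff₀ (by positivity) (by positivity)]
    nlinarith
  refine ⟨?_, ?_, by positivity, ?_⟩
  · intro n _ F hF
    exact modclass_free n 0 F (by omega)
  · set t0 := d.choose (d / 2) + 1 with ht0
    set a : ℕ → ℝ := fun n => (excT n d t0 : ℝ) / 2 ^ n with ha
    have hanti : Antitone a := by
      apply antitone_nat_of_succ_le
      intro n
      have h := excT_succ_le n d t0 (by omega)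
      have hR : (excT (n + 1) d t0 : ℝ) ≤ 2 * excT n d t0 := by exact_mod_cast h
      show (excT (n + 1) d t0 : ℝ) / 2 ^ (n + 1) ≤ (excT n d t0 : ℝ) / 2 ^ n
      rw [pow_succ, div_le_div_iff₀ (by positivity) (by positivity)]
      nlinarith [pow_pos (show (0 : ℝ) < 2 by norm_num) n,
        Nat.cast_nonneg (α := ℝ) (excT n d t0)]
    have hbdd : BddBelow (Set.range a) := by
      refine ⟨0, ?_⟩
      rintro y ⟨n, rfl⟩
      positivity
    refine ⟨⨅ n, a n, ?_, tendsto_atTop_ciInf hanti hbdd⟩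
    exact le_ciInf fun n => hlow t0 (by omega) n
  · intro t htend
    by_contra hlt
    push_neg at hlt
    have hb := hlow t hlt
    have hle : 1 / ((d : ℝ) + 1) ≤ 0 :=
      ge_of_tendsto htend (Filter.Eventually.of_forall hb)
    have hpos : (0 : ℝ) < 1 / ((d : ℝ) + 1) := by positivity
    linarith
end

section
/- For every integer l ≥ 1 there exists a constant C = C(l) such that for all n ≥ 1 and all S ⊆ V_n: |Σ_{v ∈ V_n} h_l(v)^2 − C(2l,l)·Σ_{x ∈ S} h_{2l}(x)| ≤ C·n^{2l−1}·2^n, where C(2l,l) is the central binomial coefficient. -/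
open Finset Filter Topology

/-- h_l(x) = |S ∩ Γ_l(x)|: the number of elements of S at Hamming distance exactly l from x. -/
def hcount {n : ℕ} (S : Finset (Fin n → Bool)) (l : ℕ) (x : Fin n → Bool) : ℕ :=
  (S.filter fun y => hammingDist x y = l).card

/-- h_l(x,z) = |S ∩ Γ_l(x) ∩ Γ_l(z)|: the number of elements of S at Hamming distance
exactly l from both x and z. -/
def hcount2 {n : ℕ} (S : Finset (Fin n → Bool)) (l : ℕ) (x z : Fin n → Bool) : ℕ :=
  (S.filter fun y => hammingDist x y = l ∧ hammingDist z y = l).card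


variable {n : ℕ}

/-- set of coordinates where `a` and `v` differ -/
def dsupp {n : ℕ} (a v : Fin n → Bool) : Finset (Fin n) :=
  univ.filter fun i => a i ≠ v i

lemma hd_eq (a v : Fin n → Bool) : hammingDist a v = (dsupp a v).card := rfl

lemma dsupp_inj (a : Fin n → Bool) : Function.Injective (dsupp a) := by
  intro v w h
  funext i
  have h1 := Finset.ext_iff.mp h i
  simp only [dsupp, mem_filter, mem_univ, true_and] at h1
  cases hv : v i <;> cases hw : w i <;> cases ha : a i <;>
    simp [hv, hw, ha] at h1 ⊢

/-- sphere cardinality bound -/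
lemma sphere_card_le (a : Fin n → Bool) (l : ℕ) :
    (univ.filter fun v : Fin n → Bool => hammingDist a v = l).card ≤ n.choose l := by
  classical
  have : (univ.filter fun v : Fin n → Bool => hammingDist a v = l).card
      ≤ ((univ : Finset (Fin n)).powersetCard l).card := by
    apply Finset.card_le_card_of_injOn (dsupp a)
    · intro v hv
      simp only [Finset.mem_coe, mem_filter, mem_univ, true_and] at hv
      simp [Finset.mem_powersetCard, ← hd_eq, hv]
    · intro v _ w _ h; exact dsupp_inj a h
  simpa [Finset.card_powersetCard] using this


open scoped symmDiff

lemma mem_dsupp {a v : Fin n → Bool} {i : Fin n} : i ∈ dsupp a v ↔ a i ≠ v i := by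
  simp [dsupp]

lemma dsupp_symmdiff (x z v : Fin n → Bool) (i : Fin n) :
    i ∈ (dsupp x v) ∆ (dsupp z v) ↔ x i ≠ z i := by
  simp only [Finset.mem_symmDiff, mem_dsupp]
  cases hx : x i <;> cases hz : z i <;> cases hv : v i <;> simp

lemma card_add_card (x z v : Fin n → Bool) :
    hammingDist x v + hammingDist z v
      = hammingDist x z + 2 * ((dsupp x v) ∩ (dsupp z v)).card := by
  classical
  have h1 : ((dsupp x v) ∆ (dsupp z v)) = dsupp x z := by
    ext i; rw [dsupp_symmdiff, mem_dsupp]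
  have h2 : ((dsupp x v) ∆ (dsupp z v)).card
      = ((dsupp x v) \ (dsupp z v)).card + ((dsupp z v) \ (dsupp x v)).card := by
    rw [symmDiff_def, Finset.sup_eq_union]
    exact Finset.card_union_of_disjoint (disjoint_sdiff_sdiff)
  have h5 := Finset.card_sdiff_add_card_inter (dsupp x v) (dsupp z v)
  have h6 := Finset.card_sdiff_add_card_inter (dsupp z v) (dsupp x v)
  rw [Finset.inter_comm] at h6
  rw [hd_eq, hd_eq, hd_eq, ← h1]
  omega

/-- (C) if dist x z = 2l then the sphere intersection has card choose (2l) l -/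
lemma inter_sphere_card (l : ℕ) (x z : Fin n → Bool) (hxz : hammingDist x z = 2 * l) :
    (univ.filter fun v : Fin n → Bool =>
      hammingDist x v = l ∧ hammingDist z v = l).card = (2 * l).choose l := by
  classical
  have hDcard : (dsupp x z).card = 2 * l := hxz
  have key : (univ.filter fun v : Fin n → Bool =>
      hammingDist x v = l ∧ hammingDist z v = l).card
        = ((dsupp x z).powersetCard l).card := by
    apply Finset.card_bij' (fun v _ => dsupp x v)
      (fun T _ => fun i => if i ∈ T then !(x i) else x i)
    case hi =>
      intro v hv
      simp only [mem_filter, mem_univ, true_and] at hv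
      obtain ⟨h1, h2⟩ := hv
      have hsum := card_add_card x z v
      rw [h1, h2, hxz] at hsum
      have hint : ((dsupp x v) ∩ (dsupp z v)).card = 0 := by omega
      have hdisj : Disjoint (dsupp x v) (dsupp z v) :=
        Finset.disjoint_iff_inter_eq_empty.mpr (Finset.card_eq_zero.mp hint)
      rw [Finset.mem_powersetCard]
      refine ⟨?_, by rw [← hd_eq, h1]⟩
      intro i hi
      have hmem : i ∈ (dsupp x v) ∆ (dsupp z v) :=
        Finset.mem_symmDiff.mpr (Or.inl ⟨hi, Finset.disjoint_left.mp hdisj hi⟩)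
      exact mem_dsupp.mpr ((dsupp_symmdiff x z v i).mp hmem)
    case hj =>
      intro T hT
      rw [Finset.mem_powersetCard] at hT
      obtain ⟨hTsub, hTcard⟩ := hT
      simp only [mem_filter, mem_univ, true_and]
      constructor
      · rw [hd_eq]
        have h : dsupp x (fun i => if i ∈ T then !(x i) else x i) = T := by
          ext i
          rw [mem_dsupp]
          by_cases hi : i ∈ T <;> simp [hi]
        rw [h, hTcard]
      · rw [hd_eq]
        have h : dsupp z (fun i => if i ∈ T then !(x i) else x i) = dsupp x z \ T := by
          ext i
          rw [mem_dsupp, Finset.mem_sdiff, mem_dsupp]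
          by_cases hi : i ∈ T
          · have hxzi : x i ≠ z i := mem_dsupp.mp (hTsub hi)
            simp only [hi, if_pos]
            cases hx : x i <;> cases hz : z i <;> simp_all
          · simp [hi, ne_comm]
        rw [h, Finset.card_sdiff_of_subset hTsub, hDcard, hTcard]
        omega
    case left_inv =>
      intro v hv
      funext i
      by_cases h : i ∈ dsupp x v
      · have hh : x i ≠ v i := mem_dsupp.mp h
        simp only [h, if_pos]
        cases hx : x i <;> cases hvv : v i <;> simp_all
      · have hh : x i = v i := not_not.mp fun h' => h (mem_dsupp.mpr h')
        simp only [h, if_neg, not_false_iff]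
        exact hh
    case right_inv =>
      intro T hT
      ext i
      rw [mem_dsupp]
      by_cases hi : i ∈ T <;> simp [hi]
  rw [key, Finset.card_powersetCard, hDcard]

lemma half_sphere_card_le (l : ℕ) (hl : 1 ≤ l) (v : Fin n → Bool) (i : Fin n) :
    (univ.filter fun z : Fin n → Bool =>
      hammingDist z v = l ∧ z i ≠ v i).card ≤ n.choose (l - 1) := by
  classical
  have : (univ.filter fun z : Fin n → Bool => hammingDist z v = l ∧ z i ≠ v i).card
      ≤ ((univ : Finset (Fin n)).powersetCard (l - 1)).card := by
    apply Finset.card_le_card_of_injOn (fun z => (dsupp v z).erase i)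
    · intro z hz
      simp only [Finset.mem_coe, mem_filter, mem_univ, true_and] at hz ⊢
      obtain ⟨h1, h2⟩ := hz
      rw [Finset.mem_powersetCard]
      refine ⟨Finset.subset_univ _, ?_⟩
      rw [Finset.card_erase_of_mem (mem_dsupp.mpr (Ne.symm h2))]
      rw [hammingDist_comm] at h1
      rw [← hd_eq, h1]
    · intro z hz w hw h
      simp only [Finset.mem_coe, mem_filter, mem_univ, true_and] at hz hw
      apply dsupp_inj v
      have hi1 : i ∈ dsupp v z := mem_dsupp.mpr (Ne.symm hz.2)
      have hi2 : i ∈ dsupp v w := mem_dsupp.mpr (Ne.symm hw.2)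
      have := congrArg (insert i) h
      rwa [Finset.insert_erase hi1, Finset.insert_erase hi2] at this
  simpa [Finset.card_powersetCard] using this

lemma near_count_le (l : ℕ) (hl : 1 ≤ l) (x v : Fin n → Bool)
    (hxv : hammingDist x v = l) (S : Finset (Fin n → Bool)) :
    (S.filter fun z => hammingDist z v = l ∧ hammingDist x z ≠ 2 * l).card
      ≤ l * n.choose (l - 1) := by
  classical
  have hsub : (S.filter fun z => hammingDist z v = l ∧ hammingDist x z ≠ 2 * l)
      ⊆ (dsupp x v).biUnion (fun i =>
        univ.filter fun z : Fin n → Bool => hammingDist z v = l ∧ z i ≠ v i) := by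
    intro z hz
    simp only [mem_filter] at hz
    obtain ⟨hzS, h1, h2⟩ := hz
    have hsum := card_add_card x z v
    rw [hxv, h1] at hsum
    have hne : ((dsupp x v) ∩ (dsupp z v)).Nonempty := by
      rw [Finset.nonempty_iff_ne_empty]
      intro hemp
      rw [hemp, Finset.card_empty] at hsum
      omega
    obtain ⟨i, hi⟩ := hne
    rw [Finset.mem_inter] at hi
    rw [Finset.mem_biUnion]
    refine ⟨i, hi.1, ?_⟩
    simp only [mem_filter, mem_univ, true_and]
    exact ⟨h1, mem_dsupp.mp hi.2⟩
  calc (S.filter fun z => hammingDist z v = l ∧ hammingDist x z ≠ 2 * l).card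
      ≤ ((dsupp x v).biUnion (fun i =>
        univ.filter fun z : Fin n → Bool => hammingDist z v = l ∧ z i ≠ v i)).card :=
        Finset.card_le_card hsub
    _ ≤ ∑ i ∈ dsupp x v, (univ.filter fun z : Fin n → Bool =>
        hammingDist z v = l ∧ z i ≠ v i).card := Finset.card_biUnion_le
    _ ≤ ∑ i ∈ dsupp x v, n.choose (l - 1) := by
        exact Finset.sum_le_sum fun i _ => half_sphere_card_le l hl v i
    _ = l * n.choose (l - 1) := by
        rw [Finset.sum_const, smul_eq_mul, ← hd_eq, hxv]

lemma hcount_eq_sum (l : ℕ) (S : Finset (Fin n → Bool)) (v : Fin n → Bool) :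
    hcount S l v = ∑ x ∈ S, if hammingDist x v = l then 1 else 0 := by
  rw [hcount, Finset.card_filter]
  exact Finset.sum_congr rfl fun y _ => by rw [hammingDist_comm]

lemma step1 (l : ℕ) (S : Finset (Fin n → Bool)) :
    ∑ v : Fin n → Bool, (hcount S l v)^2
      = ∑ x ∈ S, ∑ z ∈ S, (univ.filter fun v : Fin n → Bool =>
          hammingDist x v = l ∧ hammingDist z v = l).card := by
  classical
  calc ∑ v : Fin n → Bool, (hcount S l v)^2
      = ∑ v : Fin n → Bool, ∑ x ∈ S, ∑ z ∈ S,
          ((if hammingDist x v = l then 1 else 0) *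
            (if hammingDist z v = l then 1 else 0)) := by
        refine Finset.sum_congr rfl fun v _ => ?_
        rw [hcount_eq_sum, sq, Finset.sum_mul_sum]
    _ = ∑ x ∈ S, ∑ z ∈ S, ∑ v : Fin n → Bool,
          ((if hammingDist x v = l then 1 else 0) *
            (if hammingDist z v = l then 1 else 0)) := by
        rw [Finset.sum_comm]
        exact Finset.sum_congr rfl fun x _ => Finset.sum_comm
    _ = _ := by
        refine Finset.sum_congr rfl fun x _ => Finset.sum_congr rfl fun z _ => ?_
        rw [Finset.card_filter]
        refine Finset.sum_congr rfl fun v _ => ?_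
        by_cases hp : hammingDist x v = l <;> by_cases hq : hammingDist z v = l <;>
          simp [hp, hq]

lemma main_nat (l : ℕ) (hl : 1 ≤ l) (S : Finset (Fin n → Bool)) :
    ∃ E : ℕ, (∑ v : Fin n → Bool, (hcount S l v)^2
        = (2*l).choose l * ∑ x ∈ S, hcount S (2*l) x + E)
      ∧ E ≤ S.card * (n.choose l * (l * n.choose (l-1))) := by
  classical
  set N : (Fin n → Bool) → (Fin n → Bool) → ℕ := fun x z =>
    (univ.filter fun v : Fin n → Bool =>
      hammingDist x v = l ∧ hammingDist z v = l).card with hN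
  refine ⟨∑ x ∈ S, ∑ z ∈ S, (if hammingDist x z = 2*l then 0 else N x z), ?_, ?_⟩
  · rw [step1]
    have hsplit : ∀ x ∈ S, ∀ z ∈ S, N x z
        = (if hammingDist x z = 2*l then (2*l).choose l else 0)
          + (if hammingDist x z = 2*l then 0 else N x z) := by
      intro x _ z _
      by_cases h : hammingDist x z = 2*l
      · simp [h, hN, inter_sphere_card l x z h]
      · simp [h]
    calc ∑ x ∈ S, ∑ z ∈ S, N x z
        = ∑ x ∈ S, ∑ z ∈ S, ((if hammingDist x z = 2*l then (2*l).choose l else 0)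
            + (if hammingDist x z = 2*l then 0 else N x z)) := by
          refine Finset.sum_congr rfl fun x hx => Finset.sum_congr rfl fun z hz => ?_
          exact hsplit x hx z hz
      _ = (∑ x ∈ S, ∑ z ∈ S, (if hammingDist x z = 2*l then (2*l).choose l else 0))
            + ∑ x ∈ S, ∑ z ∈ S, (if hammingDist x z = 2*l then 0 else N x z) := by
          rw [← Finset.sum_add_distrib]
          exact Finset.sum_congr rfl fun x _ => Finset.sum_add_distrib
      _ = (2*l).choose l * ∑ x ∈ S, hcount S (2*l) x
            + ∑ x ∈ S, ∑ z ∈ S, (if hammingDist x z = 2*l then 0 else N x z) := by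
          congr 1
          rw [Finset.mul_sum]
          refine Finset.sum_congr rfl fun x _ => ?_
          rw [hcount, Finset.card_filter, Finset.mul_sum]
          exact Finset.sum_congr rfl fun z _ => by
            by_cases h : hammingDist x z = 2*l <;> simp [h]
  · -- bound
    have hx_bound : ∀ x ∈ S, ∑ z ∈ S, (if hammingDist x z = 2*l then 0 else N x z)
        ≤ n.choose l * (l * n.choose (l-1)) := by
      intro x _
      have h1 : ∑ z ∈ S, (if hammingDist x z = 2*l then 0 else N x z)
          = ∑ z ∈ S, ∑ v : Fin n → Bool,
              (if hammingDist x v = l ∧ hammingDist z v = l ∧ hammingDist x z ≠ 2*l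
                then 1 else 0) := by
        refine Finset.sum_congr rfl fun z _ => ?_
        by_cases h : hammingDist x z = 2*l
        · simp [h]
        · simp only [h, if_neg, not_false_iff, hN]
          rw [Finset.card_filter]
          refine Finset.sum_congr rfl fun v _ => ?_
          by_cases hp : hammingDist x v = l <;> by_cases hq : hammingDist z v = l <;>
            simp [hp, hq, h]
      rw [h1, Finset.sum_comm]
      have h2 : ∀ v : Fin n → Bool, ∑ z ∈ S,
          (if hammingDist x v = l ∧ hammingDist z v = l ∧ hammingDist x z ≠ 2*l
            then 1 else 0)
          = if hammingDist x v = l then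
              (S.filter fun z => hammingDist z v = l ∧ hammingDist x z ≠ 2*l).card
            else 0 := by
        intro v
        by_cases hv : hammingDist x v = l
        · rw [if_pos hv, Finset.card_filter]
          exact Finset.sum_congr rfl fun z _ => by
            by_cases hq : hammingDist z v = l ∧ hammingDist x z ≠ 2*l <;>
              simp [hq, hv]
        · rw [if_neg hv]
          exact Finset.sum_eq_zero fun z _ => by simp [hv]
      calc ∑ v : Fin n → Bool, ∑ z ∈ S,
            (if hammingDist x v = l ∧ hammingDist z v = l ∧ hammingDist x z ≠ 2*l
              then 1 else 0)
          = ∑ v : Fin n → Bool, (if hammingDist x v = l then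
              (S.filter fun z => hammingDist z v = l ∧ hammingDist x z ≠ 2*l).card
            else 0) := Finset.sum_congr rfl fun v _ => h2 v
        _ ≤ ∑ v : Fin n → Bool,
              (if hammingDist x v = l then l * n.choose (l-1) else 0) := by
            refine Finset.sum_le_sum fun v _ => ?_
            by_cases hv : hammingDist x v = l
            · simp only [hv, if_pos]
              exact near_count_le l hl x v hv S
            · simp [hv]
        _ = (univ.filter fun v : Fin n → Bool => hammingDist x v = l).card
              * (l * n.choose (l-1)) := by
            rw [← Finset.sum_filter, Finset.sum_const, smul_eq_mul]
        _ ≤ n.choose l * (l * n.choose (l-1)) :=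
            Nat.mul_le_mul_right _ (sphere_card_le x l)
    calc ∑ x ∈ S, ∑ z ∈ S, (if hammingDist x z = 2*l then 0 else N x z)
        ≤ ∑ x ∈ S, n.choose l * (l * n.choose (l-1)) :=
          Finset.sum_le_sum hx_bound
      _ = S.card * (n.choose l * (l * n.choose (l-1))) := by
          rw [Finset.sum_const, smul_eq_mul]

/-- Key lemma (i): Σ_{v ∈ V_n} h_l(v)² = C(2l,l)·Σ_{x ∈ S} h_{2l}(x) + O(n^{2l−1} 2^n). -/
theorem key_lemma_i (l : ℕ) (hl : 1 ≤ l) :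
    ∃ C : ℝ, ∀ n : ℕ, 1 ≤ n → ∀ S : Finset (Fin n → Bool),
      |(∑ v : Fin n → Bool, (hcount S l v : ℝ) ^ 2) -
          ((2 * l).choose l : ℝ) * ∑ x ∈ S, (hcount S (2 * l) x : ℝ)| ≤
        C * (n : ℝ) ^ (2 * l - 1) * 2 ^ n := by
  refine ⟨(l : ℝ), fun n hn S => ?_⟩
  obtain ⟨E, hEeq, hEle⟩ := main_nat l hl S
  have hE2 : E ≤ l * n ^ (2*l - 1) * 2 ^ n := by
    calc E ≤ S.card * (n.choose l * (l * n.choose (l-1))) := hEle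
      _ ≤ 2^n * (n^l * (l * n^(l-1))) := by
          refine Nat.mul_le_mul ?_ (Nat.mul_le_mul (Nat.choose_le_pow n l)
            (Nat.mul_le_mul_left _ (Nat.choose_le_pow n (l-1))))
          calc S.card ≤ Fintype.card (Fin n → Bool) := Finset.card_le_univ S
            _ = 2^n := by simp
      _ = l * n^(2*l-1) * 2^n := by
          rw [show 2*l-1 = l + (l-1) by omega, pow_add]; ring
  have hcast : (∑ v : Fin n → Bool, (hcount S l v : ℝ)^2)
      - ((2*l).choose l : ℝ) * ∑ x ∈ S, (hcount S (2*l) x : ℝ) = (E : ℝ) := by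
    have h := congrArg (fun k : ℕ => (k : ℝ)) hEeq
    push_cast at h
    linarith [h]
  rw [hcast, abs_of_nonneg (by positivity : (0:ℝ) ≤ (E:ℝ))]
  calc (E : ℝ) ≤ ((l * n^(2*l-1) * 2^n : ℕ) : ℝ) := by exact_mod_cast hE2
    _ = (l:ℝ) * (n:ℝ)^(2*l-1) * 2^n := by push_cast; ring
end

section
/- For every integer l ≥ 1 there exists a constant C = C(l) such that for all n ≥ 1 and all S ⊆ V_n: |Σ_{v ∈ S} h_l(v)^2 − Σ_{x ∈ S} Σ_{z ∈ S ∩ Γ_{2l}(x)} h_l(x,z)| ≤ C·n^{2l−1}·2^n. -/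
open Finset Filter Topology

lemma hd_eq_s18 {n : ℕ} (x z : Fin n → Bool) :
    hammingDist x z = (Finset.univ.filter fun i => x i ≠ z i).card := rfl

lemma diff_update {n : ℕ} (v z : Fin n → Bool) (i : Fin n) :
    (Finset.univ.filter fun j => v j ≠ Function.update z i (v i) j) =
      (Finset.univ.filter fun j => v j ≠ z j).erase i := by
  ext j
  by_cases hji : j = i <;> simp [hji, Function.update_apply]

lemma dist_update {n : ℕ} (v z : Fin n → Bool) (i : Fin n) (hi : v i ≠ z i) :
    hammingDist v (Function.update z i (v i)) = hammingDist v z - 1 := by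
  rw [hd_eq_s18, hd_eq_s18, diff_update, Finset.card_erase_of_mem]
  simp [hi]

lemma update_inj {n : ℕ} (v z₁ z₂ : Fin n → Bool) (i : Fin n) (h1 : v i ≠ z₁ i)
    (h2 : v i ≠ z₂ i) (h : Function.update z₁ i (v i) = Function.update z₂ i (v i)) :
    z₁ = z₂ := by
  funext j
  by_cases hji : j = i
  · subst hji
    revert h1 h2; cases z₁ j <;> cases z₂ j <;> cases v j <;> simp
  · have := congrFun h j
    simpa [Function.update_apply, hji] using this

lemma card_sphere_le (n : ℕ) : ∀ (k : ℕ) (v : Fin n → Bool),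
    (Finset.univ.filter fun z => hammingDist v z = k).card ≤ n ^ k := by
  intro k
  induction k with
  | zero =>
    intro v
    have hs : (Finset.univ.filter fun z => hammingDist v z = 0) ⊆ {v} := by
      intro z hz
      simp only [Finset.mem_filter, Finset.mem_univ, true_and] at hz
      simp [(hammingDist_eq_zero.mp hz).symm]
    calc (Finset.univ.filter fun z => hammingDist v z = 0).card
        ≤ ({v} : Finset (Fin n → Bool)).card := Finset.card_le_card hs
      _ ≤ n ^ 0 := by simp
  | succ k ih =>
    intro v
    set s := Finset.univ.filter fun z => hammingDist v z = k + 1 with hsdef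
    rcases s.eq_empty_or_nonempty with he | ⟨z₀, hz₀⟩
    · simp [he]
    have hn : 1 ≤ n := by
      simp only [hsdef, Finset.mem_filter] at hz₀
      have h1 : hammingDist v z₀ ≤ n := by
        rw [hd_eq_s18]
        calc _ ≤ (Finset.univ : Finset (Fin n)).card := Finset.card_le_card (Finset.filter_subset _ _)
          _ = n := by simp
      omega
    haveI : NeZero n := ⟨by omega⟩
    classical
    let d : (Fin n → Bool) → Finset (Fin n) := fun z => Finset.univ.filter fun i => v i ≠ z i
    have hdcard : ∀ z, (d z).card = hammingDist v z := fun z => rfl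
    have hdz : ∀ z ∈ s, (d z).Nonempty := by
      intro z hz
      simp only [hsdef, Finset.mem_filter] at hz
      rw [← Finset.card_pos, hdcard, hz.2]
      omega
    let f : (Fin n → Bool) → (Fin n) × (Fin n → Bool) := fun z =>
      if h : (d z).Nonempty then
        ((d z).min' h, Function.update z ((d z).min' h) (v ((d z).min' h)))
      else (0, z)
    have hf : ∀ z (h : (d z).Nonempty), f z =
        ((d z).min' h, Function.update z ((d z).min' h) (v ((d z).min' h))) := by
      intro z h; simp only [f, dif_pos h]
    have hmaps : ∀ z ∈ s, f z ∈
        (Finset.univ : Finset (Fin n)) ×ˢ (Finset.univ.filter fun w => hammingDist v w = k) := by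
      intro z hz
      have hne := hdz z hz
      have hi : (d z).min' hne ∈ d z := Finset.min'_mem _ _
      simp only [d, Finset.mem_filter, Finset.mem_univ, true_and] at hi
      rw [hf z hne]
      simp only [Finset.mem_product, Finset.mem_univ, true_and, Finset.mem_filter]
      rw [dist_update v z _ hi]
      simp only [hsdef, Finset.mem_filter] at hz
      omega
    have hinj : Set.InjOn f s := by
      intro z₁ h₁ z₂ h₂ heq
      have hne₁ := hdz z₁ h₁
      have hne₂ := hdz z₂ h₂
      rw [hf z₁ hne₁, hf z₂ hne₂] at heq
      simp only [Prod.mk.injEq] at heq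
      obtain ⟨hfst, hsnd⟩ := heq
      have hi₁ : (d z₁).min' hne₁ ∈ d z₁ := Finset.min'_mem _ _
      have hi₂ : (d z₂).min' hne₂ ∈ d z₂ := Finset.min'_mem _ _
      simp only [d, Finset.mem_filter, Finset.mem_univ, true_and] at hi₁ hi₂
      rw [hfst] at hi₁ hsnd
      exact update_inj v z₁ z₂ _ hi₁ hi₂ hsnd
    calc s.card ≤ ((Finset.univ : Finset (Fin n)) ×ˢ
          (Finset.univ.filter fun w => hammingDist v w = k)).card :=
        Finset.card_le_card_of_injOn f hmaps hinj
      _ = n * (Finset.univ.filter fun w => hammingDist v w = k).card := by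
          rw [Finset.card_product]; simp
      _ ≤ n * n ^ k := Nat.mul_le_mul_left n (ih v)
      _ = n ^ (k + 1) := by ring

lemma card_bad_le {n l : ℕ} (hl : 1 ≤ l) (x v : Fin n → Bool) (hxv : hammingDist x v = l)
    (T : Finset (Fin n → Bool)) :
    (T.filter fun z => hammingDist v z = l ∧ hammingDist x z ≠ 2 * l).card
      ≤ l * n ^ (l - 1) := by
  classical
  set s := T.filter fun z => hammingDist v z = l ∧ hammingDist x z ≠ 2 * l with hsdef
  -- key: every z in s has a coordinate where both v ≠ z and x ≠ v
  let d : (Fin n → Bool) → Finset (Fin n) := fun z =>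
    Finset.univ.filter fun i => v i ≠ z i ∧ x i ≠ v i
  have hdz : ∀ z ∈ s, (d z).Nonempty := by
    intro z hz
    simp only [hsdef, Finset.mem_filter] at hz
    obtain ⟨-, hvz, hxz⟩ := hz
    rw [Finset.filter_nonempty_iff]
    by_contra hc
    push_neg at hc
    -- then the diff sets of (x,v) and (v,z) are disjoint, so dist x z = 2l
    apply hxz
    have hdisj : Disjoint (Finset.univ.filter fun i => x i ≠ v i)
        (Finset.univ.filter fun i => v i ≠ z i) := by
      rw [Finset.disjoint_filter]
      intro i _ hxvi hvzi
      exact hxvi (hc i (Finset.mem_univ i) hvzi)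
    have hunion : (Finset.univ.filter fun i => x i ≠ z i) =
        (Finset.univ.filter fun i => x i ≠ v i) ∪ (Finset.univ.filter fun i => v i ≠ z i) := by
      ext j
      simp only [Finset.mem_filter, Finset.mem_union, Finset.mem_univ, true_and]
      have hj := fun h1 => hc j (Finset.mem_univ j) h1
      cases hx : x j <;> cases hv : v j <;> cases hz' : z j <;> simp_all
    rw [hd_eq_s18, hunion, Finset.card_union_of_disjoint hdisj, ← hd_eq_s18, ← hd_eq_s18, hxv, hvz]
    ring
  haveI : Nonempty (Fin n) := by
    have h1 : hammingDist x v ≤ n := by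
      rw [hd_eq_s18]
      calc _ ≤ (Finset.univ : Finset (Fin n)).card :=
            Finset.card_le_card (Finset.filter_subset _ _)
        _ = n := by simp
    exact Fin.pos_iff_nonempty.mp (by omega)
  let f : (Fin n → Bool) → (Fin n) × (Fin n → Bool) := fun z =>
    if h : (d z).Nonempty then
      ((d z).min' h, Function.update z ((d z).min' h) (v ((d z).min' h)))
    else (Classical.arbitrary _, z)
  have hf : ∀ z (h : (d z).Nonempty), f z =
      ((d z).min' h, Function.update z ((d z).min' h) (v ((d z).min' h))) := by
    intro z h; simp only [f, dif_pos h]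
  have hmaps : ∀ z ∈ s, f z ∈
      (Finset.univ.filter fun i => x i ≠ v i) ×ˢ
        (Finset.univ.filter fun w => hammingDist v w = l - 1) := by
    intro z hz
    have hne := hdz z hz
    have hi : (d z).min' hne ∈ d z := Finset.min'_mem _ _
    simp only [d, Finset.mem_filter, Finset.mem_univ, true_and] at hi
    rw [hf z hne]
    simp only [Finset.mem_product, Finset.mem_filter, Finset.mem_univ, true_and]
    refine ⟨hi.2, ?_⟩
    rw [dist_update v z _ hi.1]
    simp only [hsdef, Finset.mem_filter] at hz
    rw [hz.2.1]
  have hinj : Set.InjOn f s := by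
    intro z₁ h₁ z₂ h₂ heq
    have hne₁ := hdz z₁ h₁
    have hne₂ := hdz z₂ h₂
    rw [hf z₁ hne₁, hf z₂ hne₂] at heq
    simp only [Prod.mk.injEq] at heq
    obtain ⟨hfst, hsnd⟩ := heq
    have hi₁ : (d z₁).min' hne₁ ∈ d z₁ := Finset.min'_mem _ _
    have hi₂ : (d z₂).min' hne₂ ∈ d z₂ := Finset.min'_mem _ _
    simp only [d, Finset.mem_filter, Finset.mem_univ, true_and] at hi₁ hi₂
    rw [hfst] at hi₁ hsnd
    exact update_inj v z₁ z₂ _ hi₁.1 hi₂.1 hsnd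
  calc s.card ≤ ((Finset.univ.filter fun i => x i ≠ v i) ×ˢ
        (Finset.univ.filter fun w => hammingDist v w = l - 1)).card :=
      Finset.card_le_card_of_injOn f hmaps hinj
    _ = l * (Finset.univ.filter fun w => hammingDist v w = l - 1).card := by
        rw [Finset.card_product, ← hd_eq_s18, hxv]
    _ ≤ l * n ^ (l - 1) := Nat.mul_le_mul_left l (card_sphere_le n (l - 1) v)

lemma triple_count {n l : ℕ} (S : Finset (Fin n → Bool)) :
    ∑ v ∈ S, (hcount S l v) ^ 2 = ∑ x ∈ S, ∑ z ∈ S, hcount2 S l x z := by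
  classical
  have h1 : ∀ v, hcount S l v = ∑ y ∈ S, if hammingDist v y = l then 1 else 0 := by
    intro v; rw [hcount, Finset.card_filter]
  have h2 : ∀ x z, hcount2 S l x z =
      ∑ y ∈ S, (if hammingDist x y = l then (1:ℕ) else 0) *
        (if hammingDist z y = l then 1 else 0) := by
    intro x z
    rw [hcount2, Finset.card_filter]
    refine Finset.sum_congr rfl fun y _ => ?_
    by_cases hxy : hammingDist x y = l <;> by_cases hzy : hammingDist z y = l <;>
      simp [hxy, hzy]
  calc ∑ v ∈ S, (hcount S l v) ^ 2
      = ∑ v ∈ S, ∑ x ∈ S, ∑ z ∈ S,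
          (if hammingDist v x = l then (1:ℕ) else 0) *
            (if hammingDist v z = l then 1 else 0) := by
        refine Finset.sum_congr rfl fun v _ => ?_
        rw [h1, sq, Finset.sum_mul_sum]
    _ = ∑ x ∈ S, ∑ z ∈ S, ∑ v ∈ S,
          (if hammingDist v x = l then (1:ℕ) else 0) *
            (if hammingDist v z = l then 1 else 0) := by
        rw [Finset.sum_comm]
        exact Finset.sum_congr rfl fun x _ => Finset.sum_comm
    _ = ∑ x ∈ S, ∑ z ∈ S, hcount2 S l x z := by
        refine Finset.sum_congr rfl fun x _ => Finset.sum_congr rfl fun z _ => ?_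
        rw [h2]
        exact Finset.sum_congr rfl fun v _ => by
          rw [hammingDist_comm v x, hammingDist_comm v z]

lemma error_bound {n l : ℕ} (hl : 1 ≤ l) (S : Finset (Fin n → Bool)) (x : Fin n → Bool) :
    ∑ z ∈ S.filter (fun z => ¬ hammingDist x z = 2 * l), hcount2 S l x z
      ≤ l * (n ^ l * n ^ (l - 1)) := by
  classical
  set A := S.filter (fun z => ¬ hammingDist x z = 2 * l) with hA
  have h2 : ∀ z, hcount2 S l x z =
      ∑ y ∈ S, if hammingDist x y = l ∧ hammingDist z y = l then 1 else 0 := fun z => by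
    rw [hcount2, Finset.card_filter]
  calc ∑ z ∈ A, hcount2 S l x z
      = ∑ y ∈ S, ∑ z ∈ A,
          (if hammingDist x y = l ∧ hammingDist z y = l then (1:ℕ) else 0) := by
        simp only [h2]; rw [Finset.sum_comm]
    _ ≤ ∑ y ∈ S, (if hammingDist x y = l then l * n ^ (l - 1) else 0) := by
        refine Finset.sum_le_sum fun y _ => ?_
        by_cases hxy : hammingDist x y = l
        · rw [if_pos hxy]
          rw [← Finset.card_filter]
          have hsub : (A.filter fun z => hammingDist x y = l ∧ hammingDist z y = l) ⊆
              S.filter fun z => hammingDist y z = l ∧ hammingDist x z ≠ 2 * l := by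
            intro z hz
            simp only [hA, Finset.mem_filter] at hz ⊢
            exact ⟨hz.1.1, by rw [hammingDist_comm]; exact hz.2.2, hz.1.2⟩
          exact le_trans (Finset.card_le_card hsub) (card_bad_le hl x y hxy S)
        · simp [hxy]
    _ = (S.filter fun y => hammingDist x y = l).card * (l * n ^ (l - 1)) := by
        rw [← Finset.sum_filter, Finset.sum_const, smul_eq_mul]
    _ ≤ n ^ l * (l * n ^ (l - 1)) := by
        refine Nat.mul_le_mul_right _ ?_
        have hsub2 : (S.filter fun y => hammingDist x y = l) ⊆
            (Finset.univ.filter fun y => hammingDist x y = l) := by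
          intro y hy
          simp only [Finset.mem_filter] at hy ⊢
          exact ⟨Finset.mem_univ y, hy.2⟩
        exact le_trans (Finset.card_le_card hsub2) (card_sphere_le n l x)
    _ = l * (n ^ l * n ^ (l - 1)) := by ring


/-- Key lemma (ii): Σ_{v ∈ S} h_l(v)² = Σ_{x ∈ S} Σ_{z ∈ S ∩ Γ_{2l}(x)} h_l(x,z)
+ O(n^{2l−1} 2^n). -/
theorem key_lemma_ii (l : ℕ) (hl : 1 ≤ l) :
    ∃ C : ℝ, ∀ n : ℕ, 1 ≤ n → ∀ S : Finset (Fin n → Bool),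
      |(∑ v ∈ S, (hcount S l v : ℝ) ^ 2) -
          ∑ x ∈ S, ∑ z ∈ S.filter (fun z => hammingDist x z = 2 * l),
            (hcount2 S l x z : ℝ)| ≤
        C * (n : ℝ) ^ (2 * l - 1) * 2 ^ n := by
  classical
  refine ⟨l, fun n hn S => ?_⟩
  have hfull : (∑ v ∈ S, (hcount S l v : ℝ) ^ 2) =
      ∑ x ∈ S, ∑ z ∈ S, (hcount2 S l x z : ℝ) := by
    have h0 := triple_count (l := l) S
    calc (∑ v ∈ S, (hcount S l v : ℝ) ^ 2)
        = ((∑ v ∈ S, (hcount S l v) ^ 2 : ℕ) : ℝ) := by push_cast; rfl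
      _ = ((∑ x ∈ S, ∑ z ∈ S, hcount2 S l x z : ℕ) : ℝ) := by rw [h0]
      _ = ∑ x ∈ S, ∑ z ∈ S, (hcount2 S l x z : ℝ) := by push_cast; rfl
  have hsplit : ∀ x ∈ S, ∑ z ∈ S, (hcount2 S l x z : ℝ) =
      (∑ z ∈ S.filter (fun z => hammingDist x z = 2 * l), (hcount2 S l x z : ℝ)) +
      ∑ z ∈ S.filter (fun z => ¬ hammingDist x z = 2 * l), (hcount2 S l x z : ℝ) :=
    fun x _ => (Finset.sum_filter_add_sum_filter_not S _ _).symm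
  rw [hfull, Finset.sum_congr rfl hsplit, Finset.sum_add_distrib, add_sub_cancel_left]
  have herr_nat : ∑ x ∈ S, ∑ z ∈ S.filter (fun z => ¬ hammingDist x z = 2 * l),
      hcount2 S l x z ≤ 2 ^ n * (l * (n ^ l * n ^ (l - 1))) := by
    calc _ ≤ ∑ _x ∈ S, l * (n ^ l * n ^ (l - 1)) :=
          Finset.sum_le_sum fun x _ => error_bound hl S x
      _ = S.card * (l * (n ^ l * n ^ (l - 1))) := by rw [Finset.sum_const, smul_eq_mul]
      _ ≤ 2 ^ n * (l * (n ^ l * n ^ (l - 1))) := by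
          refine Nat.mul_le_mul_right _ ?_
          calc S.card ≤ (Finset.univ : Finset (Fin n → Bool)).card :=
                Finset.card_le_card (Finset.subset_univ S)
            _ = 2 ^ n := by simp
  have habs : |∑ x ∈ S, ∑ z ∈ S.filter (fun z => ¬ hammingDist x z = 2 * l),
      (hcount2 S l x z : ℝ)| =
      ((∑ x ∈ S, ∑ z ∈ S.filter (fun z => ¬ hammingDist x z = 2 * l),
        hcount2 S l x z : ℕ) : ℝ) := by
    rw [abs_of_nonneg (by positivity)]
    push_cast
    rfl
  rw [habs]
  have hexp : l + (l - 1) = 2 * l - 1 := by omega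
  calc ((∑ x ∈ S, ∑ z ∈ S.filter (fun z => ¬ hammingDist x z = 2 * l),
        hcount2 S l x z : ℕ) : ℝ)
      ≤ ((2 ^ n * (l * (n ^ l * n ^ (l - 1))) : ℕ) : ℝ) := by exact_mod_cast herr_nat
    _ = (l : ℝ) * (n : ℝ) ^ (2 * l - 1) * 2 ^ n := by
        push_cast
        rw [← pow_add, hexp]
        ring
end
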